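/- Let Λ be an even lattice of the form M ⊕ ℤk ⊕ ℤℓ, where M is unimodular containing a hyperbolic plane and k² = ℓ² = −2. Write a primitive vector β ∈ Λ as β = a·m + b·k + c·ℓ with m ∈ M primitive, m² = 2t, gcd(a,b,c) = 1. Then the divisibility of β (the positive generator of the ideal β·Λ ⊂ ℤ) equals gcd(a, 2). -/

import Mathlib

/-- Let `Λ = M ⊕ ℤk ⊕ ℤℓ` be an even lattice, where `M` is unimodular and contains a
hyperbolic plane, and `k² = ℓ² = −2`.  For a primitive vector `β = a·m + b·k + c·ℓ`
(with `m ∈ M` primitive, `m² = 2t`, `gcd(a,b,c) = 1`), the set of values `β·Λ` is the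
ideal generated by `gcd(a,2)`, i.e. the divisibility of `β` equals `gcd(a, 2)`. -/
theorem divisibility_eq_gcd_a_two
    {M : Type*} [AddCommGroup M] [Module ℤ M]
    (B : M →ₗ[ℤ] M →ₗ[ℤ] ℤ)
    (hsymm : ∀ x y : M, B x y = B y x)
    (heven : ∀ x : M, 2 ∣ B x x)
    (hunimodular : Function.Bijective B)
    (hhyperbolic : ∃ u v : M, B u u = 0 ∧ B v v = 0 ∧ B u v = 1)
    (m : M) (hm : ∀ (c : ℤ) (m' : M), m = c • m' → IsUnit c)
    (t : ℤ) (hmt : B m m = 2 * t)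
    (a b c : ℤ) (habc : Int.gcd a (Int.gcd b c) = 1)
    (form : (M × ℤ × ℤ) → (M × ℤ × ℤ) → ℤ)
    (hform : ∀ x y : M × ℤ × ℤ,
      form x y = B x.1 y.1 - 2 * x.2.1 * y.2.1 - 2 * x.2.2 * y.2.2) :
    ∀ s : ℤ, (∃ x : M × ℤ × ℤ, form (a • m, b, c) x = s) ↔ ((Int.gcd a 2 : ℤ) ∣ s) := by
  -- Step 1: `B m` is surjective.
  have hφ : Function.Surjective (B m) := by
    obtain ⟨g, hg⟩ := (IsPrincipalIdealRing.principal (LinearMap.range (B m))).principal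
    have hdvd : ∀ x : M, g ∣ B m x := by
      intro x
      have hx : B m x ∈ LinearMap.range (B m) := ⟨x, rfl⟩
      rw [hg, Ideal.submodule_span_eq, Ideal.mem_span_singleton] at hx
      exact hx
    by_cases hg0 : g = 0
    · exfalso
      have hBm : B m = 0 := by
        ext x
        have hx := hdvd x
        rw [hg0] at hx
        show B m x = 0
        exact zero_dvd_iff.mp hx
      have hm0 : m = 0 := by
        apply hunimodular.1
        rw [hBm, map_zero]
      have := hm 0 0 (by simp [hm0])
      simp at this
    · -- divide B m by g
      have hψ : ∃ ψ : M →ₗ[ℤ] ℤ, ∀ x, g * ψ x = B m x := by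
        refine ⟨{ toFun := fun x => B m x / g,
                  map_add' := ?_, map_smul' := ?_ }, ?_⟩
        · intro x y
          have h1 := hdvd x
          have h2 := hdvd y
          have : g * ((B m (x + y)) / g) = g * (B m x / g + B m y / g) := by
            rw [Int.mul_ediv_cancel' (by simpa using (dvd_add h1 h2))]
            rw [mul_add, Int.mul_ediv_cancel' h1, Int.mul_ediv_cancel' h2]
            simp
          exact mul_left_cancel₀ hg0 this
        · intro r x
          have h1 := hdvd x
          have : g * ((B m (r • x)) / g) = g * (r * (B m x / g)) := by
            rw [Int.mul_ediv_cancel' (by simpa using Dvd.dvd.mul_left h1 r)]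
            rw [mul_left_comm, Int.mul_ediv_cancel' h1]
            simp [mul_comm]
          simpa using mul_left_cancel₀ hg0 this
        · intro x
          exact Int.mul_ediv_cancel' (hdvd x)
      obtain ⟨ψ, hψeq⟩ := hψ
      obtain ⟨m', hm'⟩ := hunimodular.2 ψ
      have hmg : m = g • m' := by
        apply hunimodular.1
        rw [← Int.cast_smul_eq_zsmul ℤ g m', Int.cast_id, LinearMap.map_smul]
        ext x
        simp only [LinearMap.smul_apply, smul_eq_mul, hm']
        exact (hψeq x).symm
      have hunit : IsUnit g := hm g m' hmg
      intro s
      have : s ∈ LinearMap.range (B m) := by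
        rw [hg, Ideal.submodule_span_eq, Ideal.span_singleton_eq_top.mpr hunit]
        trivial
      exact this
  intro s
  have hda : (Int.gcd a 2 : ℤ) ∣ a := Int.gcd_dvd_left a 2
  have hd2 : (Int.gcd a 2 : ℤ) ∣ 2 := Int.gcd_dvd_right a 2
  have hBa : ∀ z : M, B (a • m) z = a * B m z := by
    intro z
    rw [← Int.cast_smul_eq_zsmul ℤ a m, Int.cast_id, LinearMap.map_smul]
    simp
  constructor
  · rintro ⟨x, rfl⟩
    rw [hform, hBa]
    exact dvd_sub (dvd_sub (hda.mul_right _) (by rw [mul_assoc]; exact hd2.mul_right _))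
      (by rw [mul_assoc]; exact hd2.mul_right _)
  · rintro ⟨w, rfl⟩
    -- gcd identity: gcd a (2 * gcd b c) = gcd a 2
    set g2 : ℕ := Int.gcd b c with hg2
    have hcop : Nat.Coprime g2 a.natAbs := by
      have : Nat.gcd a.natAbs g2 = 1 := by
        simpa [Int.gcd] using habc
      exact Nat.Coprime.symm this
    have hkey : Int.gcd a (2 * (g2 : ℤ)) = Int.gcd a 2 := by
      have : Nat.gcd a.natAbs (2 * g2) = Nat.gcd a.natAbs 2 :=
        Nat.Coprime.gcd_mul_right_cancel_right 2 hcop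
      simpa [Int.gcd, Int.natAbs_mul] using this
    -- Bezout for a and 2*g2
    have hbez : (Int.gcd a 2 : ℤ) = a * Int.gcdA a (2 * g2) + (2 * g2) * Int.gcdB a (2 * g2) := by
      rw [← hkey]
      exact Int.gcd_eq_gcd_ab a (2 * g2)
    -- Bezout for b and c
    have hbez2 : (g2 : ℤ) = b * Int.gcdA b c + c * Int.gcdB b c := Int.gcd_eq_gcd_ab b c
    set u := Int.gcdA a (2 * g2)
    set v := Int.gcdB a (2 * g2)
    set p := Int.gcdA b c
    set q := Int.gcdB b c
    obtain ⟨x₁, hx₁⟩ := hφ (u * w)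
    refine ⟨(x₁, -(p * v * w), -(q * v * w)), ?_⟩
    rw [hform, hBa, hx₁]
    have : a * (u * w) - 2 * b * -(p * v * w) - 2 * c * -(q * v * w)
        = (a * u + (2 * ((b * p + c * q))) * v) * w := by ring
    rw [this]
    have hsum : a * u + (2 * (g2 : ℤ)) * v = (Int.gcd a 2 : ℤ) := hbez.symm
    rw [hbez2] at hsum
    rw [hsum]
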